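/- Let (M,b) be a non-singular symmetric quadratic object in a k-linear rigid braided monoidal category C, where 2 is invertible in k. Then (M,b) ⊥ (M,-b) is isometric to the hyperbolic object H(M) = (M ⊕ M*, b_M). -/

import Mathlib

open CategoryTheory CategoryTheory.MonoidalCategory CategoryTheory.Limits

set_option linter.unusedSectionVars false in
theorem myLiftEq {C : Type*} [Category C] [Preadditive C] [HasBinaryBiproducts C]
    {X Y Z : C} (x : X ⟶ Y) (y : X ⟶ Z) :
    biprod.lift x y = x ≫ biprod.inl + y ≫ biprod.inr := by
  apply biprod.hom_ext <;> simp

theorem mySmulTensor {k : Type*} [CommRing k] {C : Type*} [Category C] [MonoidalCategory C]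
    [Preadditive C] [Linear k C] [MonoidalPreadditive C] [MonoidalLinear k C]
    {W X Y Z : C} (r : k) (f : W ⟶ X) (g : Y ⟶ Z) : (r • f) ⊗ₘ g = r • (f ⊗ₘ g) := by
  rw [MonoidalCategory.tensorHom_def, MonoidalCategory.tensorHom_def, MonoidalLinear.smul_whiskerRight, Linear.smul_comp]

theorem myTensorSmul {k : Type*} [CommRing k] {C : Type*} [Category C] [MonoidalCategory C]
    [Preadditive C] [Linear k C] [MonoidalPreadditive C] [MonoidalLinear k C]
    {W X Y Z : C} (r : k) (f : W ⟶ X) (g : Y ⟶ Z) : f ⊗ₘ (r • g) = r • (f ⊗ₘ g) := by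
  rw [MonoidalCategory.tensorHom_def, MonoidalCategory.tensorHom_def, MonoidalLinear.whiskerLeft_smul, Linear.comp_smul]

set_option maxHeartbeats 1000000 in
/-- Let `(M,b)` be a non-singular symmetric quadratic object in a `k`-linear rigid braided
monoidal additive category `C`, with `2` invertible in `k`. Then the orthogonal sum
`(M,b) ⊥ (M,-b)` is isometric to the hyperbolic object `H(M) = (M ⊕ Mᘁ, b_M)`, where
`b_M` vanishes on `M ⊗ M` and `Mᘁ ⊗ Mᘁ`, equals `ev_M` on `Mᘁ ⊗ M` and
`ev_M ∘ c_{M,Mᘁ}` on `M ⊗ Mᘁ`. -/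
theorem stmt4 (k : Type*) [CommRing k] [Invertible (2 : k)]
    (C : Type*) [Category C] [MonoidalCategory C] [BraidedCategory C]
    [RightRigidCategory C] [Preadditive C] [Linear k C]
    [MonoidalPreadditive C] [MonoidalLinear k C] [HasBinaryBiproducts C]
    (M : C) (b : M ⊗ M ⟶ 𝟙_ C)
    (hsymm : (β_ M M).hom ≫ b = b)
    (h : M ⟶ Mᘁ) (hhb : (h ▷ M) ≫ ε_ M (Mᘁ) = b) [IsIso h]
    -- the hyperbolic form `b_M` on `M ⊞ Mᘁ`:
    (bH : (M ⊞ Mᘁ) ⊗ (M ⊞ Mᘁ) ⟶ 𝟙_ C)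
    (hH1 : (biprod.inl ⊗ₘ biprod.inl : M ⊗ M ⟶ (M ⊞ Mᘁ) ⊗ (M ⊞ Mᘁ)) ≫ bH = 0)
    (hH2 : (biprod.inr ⊗ₘ biprod.inr : Mᘁ ⊗ Mᘁ ⟶ (M ⊞ Mᘁ) ⊗ (M ⊞ Mᘁ)) ≫ bH = 0)
    (hH3 : (biprod.inr ⊗ₘ biprod.inl : Mᘁ ⊗ M ⟶ (M ⊞ Mᘁ) ⊗ (M ⊞ Mᘁ)) ≫ bH = ε_ M (Mᘁ))
    (hH4 : (biprod.inl ⊗ₘ biprod.inr : M ⊗ Mᘁ ⟶ (M ⊞ Mᘁ) ⊗ (M ⊞ Mᘁ)) ≫ bH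
      = (β_ M (Mᘁ)).hom ≫ ε_ M (Mᘁ))
    -- the orthogonal sum form of `(M,b)` and `(M,-b)` on `M ⊞ M`:
    (bO : (M ⊞ M) ⊗ (M ⊞ M) ⟶ 𝟙_ C)
    (hO1 : (biprod.inl ⊗ₘ biprod.inl : M ⊗ M ⟶ (M ⊞ M) ⊗ (M ⊞ M)) ≫ bO = b)
    (hO2 : (biprod.inr ⊗ₘ biprod.inr : M ⊗ M ⟶ (M ⊞ M) ⊗ (M ⊞ M)) ≫ bO = -b)
    (hO3 : (biprod.inl ⊗ₘ biprod.inr : M ⊗ M ⟶ (M ⊞ M) ⊗ (M ⊞ M)) ≫ bO = 0)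
    (hO4 : (biprod.inr ⊗ₘ biprod.inl : M ⊗ M ⟶ (M ⊞ M) ⊗ (M ⊞ M)) ≫ bO = 0) :
    ∃ f : (M ⊞ M) ≅ (M ⊞ Mᘁ), (f.hom ⊗ₘ f.hom) ≫ bH = bO := by
  have h2 : (⅟(2:k) + ⅟(2:k)) = 1 := invOf_two_add_invOf_two
  set c1 : M ⟶ M ⊞ Mᘁ := biprod.lift (𝟙 M) ((⅟(2:k)) • h) with hc1
  set c2 : M ⟶ M ⊞ Mᘁ := biprod.lift (𝟙 M) (-((⅟(2:k)) • h)) with hc2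
  set F : M ⊞ M ⟶ M ⊞ Mᘁ := biprod.desc c1 c2 with hF
  set G : M ⊞ Mᘁ ⟶ M ⊞ M :=
    biprod.desc (biprod.lift ((⅟(2:k)) • 𝟙 M) ((⅟(2:k)) • 𝟙 M))
      (biprod.lift (inv h) (-(inv h))) with hG
  have hFG : F ≫ G = 𝟙 _ := by
    apply biprod.hom_ext' <;> apply biprod.hom_ext <;>
      simp [hF, hG, hc1, hc2, Linear.comp_smul, Linear.smul_comp, ← add_smul, h2]
  have hGF : G ≫ F = 𝟙 _ := by
    apply biprod.hom_ext' <;> apply biprod.hom_ext <;>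
      simp [hF, hG, hc1, hc2, Linear.comp_smul, Linear.smul_comp, ← add_smul, h2]
  have hb1 : (h ⊗ₘ 𝟙 M) ≫ ε_ M (Mᘁ) = b := by rw [tensorHom_id]; exact hhb
  have hb2 : (𝟙 M ⊗ₘ h) ≫ (β_ M (Mᘁ)).hom ≫ ε_ M (Mᘁ) = b := by
    rw [id_tensorHom, BraidedCategory.braiding_naturality_right_assoc]
    rw [← hsymm]
    simp [hhb]
  have expT : ∀ (x y : M ⟶ M) (u v : M ⟶ Mᘁ),
      (biprod.lift x u ⊗ₘ biprod.lift y v) ≫ bH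
        = (u ⊗ₘ y) ≫ ε_ M (Mᘁ) + (x ⊗ₘ v) ≫ (β_ M (Mᘁ)).hom ≫ ε_ M (Mᘁ) := by
    intro x y u v
    rw [myLiftEq, myLiftEq]
    rw [MonoidalPreadditive.add_tensor, MonoidalPreadditive.tensor_add,
      MonoidalPreadditive.tensor_add, Preadditive.add_comp, Preadditive.add_comp,
      Preadditive.add_comp]
    rw [← tensorHom_comp_tensorHom, ← tensorHom_comp_tensorHom, ← tensorHom_comp_tensorHom, ← tensorHom_comp_tensorHom, Category.assoc,
      Category.assoc, Category.assoc, Category.assoc, hH1, hH2, hH3, hH4]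
    simp only [comp_zero]
    abel
  have hneg : (-((⅟(2:k)) • h)) = (-(⅟(2:k))) • h := (neg_smul _ _).symm
  have e1 : (c1 ⊗ₘ c1) ≫ bH = b := by
    rw [hc1, expT]
    simp only [mySmulTensor, myTensorSmul, Linear.smul_comp, hb1, hb2]
    rw [← add_smul, h2, one_smul]
  have e2 : (c2 ⊗ₘ c2) ≫ bH = -b := by
    rw [hc2, expT, hneg]
    simp only [mySmulTensor, myTensorSmul, Linear.smul_comp, hb1, hb2]
    rw [← add_smul, ← neg_add, h2, neg_one_smul]
  have e3 : (c1 ⊗ₘ c2) ≫ bH = 0 := by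
    rw [hc1, hc2, expT, hneg]
    simp only [mySmulTensor, myTensorSmul, Linear.smul_comp, hb1, hb2]
    rw [← add_smul, add_neg_cancel, zero_smul]
  have e4 : (c2 ⊗ₘ c1) ≫ bH = 0 := by
    rw [hc1, hc2, expT, hneg]
    simp only [mySmulTensor, myTensorSmul, Linear.smul_comp, hb1, hb2]
    rw [← add_smul, neg_add_cancel, zero_smul]
  have expand : ∀ (u : (M ⊞ M) ⊗ (M ⊞ M) ⟶ 𝟙_ C),
      u = (biprod.fst ⊗ₘ biprod.fst : (M ⊞ M) ⊗ (M ⊞ M) ⟶ M ⊗ M)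
            ≫ ((biprod.inl ⊗ₘ biprod.inl : M ⊗ M ⟶ (M ⊞ M) ⊗ (M ⊞ M)) ≫ u)
        + (biprod.fst ⊗ₘ biprod.snd : (M ⊞ M) ⊗ (M ⊞ M) ⟶ M ⊗ M)
            ≫ ((biprod.inl ⊗ₘ biprod.inr : M ⊗ M ⟶ (M ⊞ M) ⊗ (M ⊞ M)) ≫ u)
        + (biprod.snd ⊗ₘ biprod.fst : (M ⊞ M) ⊗ (M ⊞ M) ⟶ M ⊗ M)
            ≫ ((biprod.inr ⊗ₘ biprod.inl : M ⊗ M ⟶ (M ⊞ M) ⊗ (M ⊞ M)) ≫ u)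
        + (biprod.snd ⊗ₘ biprod.snd : (M ⊞ M) ⊗ (M ⊞ M) ⟶ M ⊗ M)
            ≫ ((biprod.inr ⊗ₘ biprod.inr : M ⊗ M ⟶ (M ⊞ M) ⊗ (M ⊞ M)) ≫ u) := by
    intro u
    conv_lhs => rw [← Category.id_comp u, ← id_tensorHom_id, ← biprod.total]
    rw [MonoidalPreadditive.add_tensor, MonoidalPreadditive.tensor_add,
      MonoidalPreadditive.tensor_add, ← tensorHom_comp_tensorHom, ← tensorHom_comp_tensorHom, ← tensorHom_comp_tensorHom, ← tensorHom_comp_tensorHom]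
    simp only [Preadditive.add_comp, Category.assoc]
    abel
  have key1 : (biprod.inl ⊗ₘ biprod.inl : M ⊗ M ⟶ (M ⊞ M) ⊗ (M ⊞ M)) ≫ ((F ⊗ₘ F) ≫ bH)
      = (biprod.inl ⊗ₘ biprod.inl : M ⊗ M ⟶ (M ⊞ M) ⊗ (M ⊞ M)) ≫ bO := by
    rw [← Category.assoc, tensorHom_comp_tensorHom, hF, biprod.inl_desc, e1, hO1]
  have key2 : (biprod.inl ⊗ₘ biprod.inr : M ⊗ M ⟶ (M ⊞ M) ⊗ (M ⊞ M)) ≫ ((F ⊗ₘ F) ≫ bH)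
      = (biprod.inl ⊗ₘ biprod.inr : M ⊗ M ⟶ (M ⊞ M) ⊗ (M ⊞ M)) ≫ bO := by
    rw [← Category.assoc, tensorHom_comp_tensorHom, hF, biprod.inl_desc, biprod.inr_desc, e3, hO3]
  have key3 : (biprod.inr ⊗ₘ biprod.inl : M ⊗ M ⟶ (M ⊞ M) ⊗ (M ⊞ M)) ≫ ((F ⊗ₘ F) ≫ bH)
      = (biprod.inr ⊗ₘ biprod.inl : M ⊗ M ⟶ (M ⊞ M) ⊗ (M ⊞ M)) ≫ bO := by
    rw [← Category.assoc, tensorHom_comp_tensorHom, hF, biprod.inl_desc, biprod.inr_desc, e4, hO4]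
  have key4 : (biprod.inr ⊗ₘ biprod.inr : M ⊗ M ⟶ (M ⊞ M) ⊗ (M ⊞ M)) ≫ ((F ⊗ₘ F) ≫ bH)
      = (biprod.inr ⊗ₘ biprod.inr : M ⊗ M ⟶ (M ⊞ M) ⊗ (M ⊞ M)) ≫ bO := by
    rw [← Category.assoc, tensorHom_comp_tensorHom, hF, biprod.inr_desc, e2, hO2]
  refine ⟨⟨F, G, hFG, hGF⟩, ?_⟩
  rw [expand ((F ⊗ₘ F) ≫ bH), key1, key2, key3, key4]
  exact (expand bO).symm
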